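/- Let M be an L-structure, X ⊆ M a ∅-definable subset, and suppose there is a ∅-definable surjection d from X onto M (graph ∅-definable, d maps X onto all of M) together with a ∅-definable relation ≺ that well-orders X. Then every nonempty ∅-definable subset S of M contains an element definable from a single parameter in X; in fact, for the ≺-least x ∈ X with d(x) ∈ S, the element d(x) ∈ S is {x}-definable. -/

import Mathlib

open FirstOrder Set

theorem definable_surjection_param_definable_elem
    {L : FirstOrder.Language} {M : Type*} [L.Structure M]
    (X : Set M) (hX : (∅ : Set M).Definable₁ L X)
    (d : M → M) (hddef : (∅ : Set M).Definable₂ L {p : M × M | p.2 = d p.1})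
    (hdsurj : ∀ m : M, ∃ x ∈ X, d x = m)
    (r : M → M → Prop) (hrdef : (∅ : Set M).Definable₂ L {p : M × M | r p.1 p.2})
    (hwo : IsWellOrder X (fun a b : X => r a.1 b.1))
    (S : Set M) (hS : (∅ : Set M).Definable₁ L S) (hne : S.Nonempty) :
    ∃ x ∈ X, d x ∈ S ∧ (∀ y ∈ X, d y ∈ S → ¬ r y x) ∧
      ({x} : Set M).Definable₁ L {d x} := by
  classical
  obtain ⟨m, hm⟩ := hne
  obtain ⟨x0, hx0X, hx0⟩ := hdsurj m
  have wf := hwo.wf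
  set T : Set X := {a : X | d a.1 ∈ S} with hT
  have hTne : T.Nonempty := ⟨⟨x0, hx0X⟩, by simp [hT, hx0, hm]⟩
  set a := wf.min T hTne with ha
  refine ⟨a.1, a.2, wf.min_mem T hTne, ?_, ?_⟩
  · intro y hyX hyS hr
    exact wf.not_lt_min T (show (⟨y, hyX⟩ : X) ∈ T from hyS) hr
  · have hG : ({a.1} : Set M).Definable L
        {v : Fin 2 → M | (v 0, v 1) ∈ {p : M × M | p.2 = d p.1}} :=
      hddef.mono (empty_subset _)
    obtain ⟨φ, hφ⟩ := hG
    refine ⟨φ.subst ![FirstOrder.Language.Constants.term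
        (L.con (⟨a.1, rfl⟩ : ({a.1} : Set M))),
        FirstOrder.Language.Term.var 0], ?_⟩
    ext v
    have h2 : ∀ w : Fin 2 → M, (w 1 = d (w 0)) ↔ φ.Realize w := by
      intro w
      exact Set.ext_iff.1 hφ w
    simp only [mem_setOf_eq, mem_singleton_iff, Language.Formula.Realize,
      Language.BoundedFormula.realize_subst]
    have key : (fun i => FirstOrder.Language.Term.realize v
        (![FirstOrder.Language.Constants.term
            (L.con (⟨a.1, rfl⟩ : ({a.1} : Set M))),
          FirstOrder.Language.Term.var 0] i)) = ![(a.1 : M), v 0] := by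
      funext i
      fin_cases i <;> simp
    rw [key]
    simpa [Language.Formula.Realize] using h2 ![(a.1 : M), v 0]
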